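/- The minimum sum-rate for omniscience satisfies R_CO = H(X_M) − min_P ( (∑_{S∈P} H(X_S) − H(X_M)) / (|P| − 1) ), where the minimum is over all partitions P of M with |P| ≥ 2. -/

import Mathlib

open Finset

/-- `P` is a partition of the finite set `S`. -/
def IsPartitionOf {ι : Type*} [DecidableEq ι] (P : Finset (Finset ι)) (S : Finset ι) : Prop :=
  (∀ V ∈ P, V.Nonempty) ∧ (∀ V ∈ P, ∀ W ∈ P, V ≠ W → Disjoint V W) ∧ P.biUnion id = S

namespace RcoAux

variable {m : ℕ}

/-- All partitions of `T`, as a finset. -/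
noncomputable def parts (T : Finset (Fin m)) : Finset (Finset (Finset (Fin m))) :=
  @Finset.filter _ (fun P => IsPartitionOf P T) (Classical.decPred _)
    Finset.univ.powerset.powerset

lemma mem_parts {T : Finset (Fin m)} {P : Finset (Finset (Fin m))} :
    P ∈ parts T ↔ IsPartitionOf P T := by
  unfold parts
  rw [@Finset.mem_filter _ _ (Classical.decPred _), Finset.mem_powerset, and_iff_right_iff_imp]
  intro _ S _
  exact Finset.mem_powerset.2 (Finset.subset_univ S)

lemma partitionOf_empty : IsPartitionOf (∅ : Finset (Finset (Fin m))) ∅ := by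
  refine ⟨by simp, by simp, by simp⟩

lemma partitionOf_self {T : Finset (Fin m)} (hT : T.Nonempty) :
    IsPartitionOf ({T} : Finset (Finset (Fin m))) T := by
  refine ⟨by simpa using hT, ?_, by simp⟩
  intro V hV W hW hVW
  simp only [Finset.mem_singleton] at hV hW
  exact absurd (hV.trans hW.symm) hVW

lemma parts_nonempty (T : Finset (Fin m)) : (parts T).Nonempty := by
  rcases T.eq_empty_or_nonempty with h | h
  · exact ⟨∅, mem_parts.2 (h ▸ partitionOf_empty)⟩
  · exact ⟨{T}, mem_parts.2 (partitionOf_self h)⟩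

/-- The Dilworth truncation of `g`. -/
noncomputable def phi (g : Finset (Fin m) → ℝ) (T : Finset (Fin m)) : ℝ :=
  (parts T).inf' (parts_nonempty T) (fun P => ∑ S ∈ P, g S)

lemma phi_le {g : Finset (Fin m) → ℝ} {T : Finset (Fin m)} {P : Finset (Finset (Fin m))}
    (h : IsPartitionOf P T) : phi g T ≤ ∑ S ∈ P, g S :=
  Finset.inf'_le _ (mem_parts.2 h)

lemma exists_phi (g : Finset (Fin m) → ℝ) (T : Finset (Fin m)) :
    ∃ P, IsPartitionOf P T ∧ phi g T = ∑ S ∈ P, g S := by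
  obtain ⟨P, hP, h⟩ := Finset.exists_mem_eq_inf' (parts_nonempty T) (fun P => ∑ S ∈ P, g S)
  exact ⟨P, mem_parts.1 hP, h⟩

lemma le_phi {g : Finset (Fin m) → ℝ} {T : Finset (Fin m)} {c : ℝ}
    (h : ∀ P, IsPartitionOf P T → c ≤ ∑ S ∈ P, g S) : c ≤ phi g T :=
  Finset.le_inf' _ _ (fun P hP => h P (mem_parts.1 hP))

lemma phi_empty (g : Finset (Fin m) → ℝ) : phi g (∅ : Finset (Fin m)) = 0 := by
  refine le_antisymm (by simpa using phi_le (g := g) partitionOf_empty) ?_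
  refine le_phi (fun P hP => ?_)
  have hP0 : P = ∅ := by
    rcases P.eq_empty_or_nonempty with h | ⟨S, hS⟩
    · exact h
    · exfalso
      obtain ⟨i, hi⟩ := hP.1 S hS
      have : i ∈ P.biUnion id := Finset.mem_biUnion.2 ⟨S, hS, hi⟩
      rw [hP.2.2] at this
      simp at this
  simp [hP0]

lemma phi_le_single {g : Finset (Fin m) → ℝ} {T : Finset (Fin m)} (hT : T.Nonempty) :
    phi g T ≤ g T := by
  simpa using phi_le (g := g) (partitionOf_self hT)

/-- number of members of `F` containing `i`. -/
def cov (F : Multiset (Finset (Fin m))) (i : Fin m) : ℕ :=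
  F.countP (fun S => i ∈ S)

def CrossFree (F : Multiset (Finset (Fin m))) : Prop :=
  ∀ S ∈ F, ∀ T ∈ F, S ∩ T = ∅ ∨ S ⊆ T ∨ T ⊆ S

lemma card_le_m (S : Finset (Fin m)) : S.card ≤ m :=
  le_trans (Finset.card_le_univ S) (le_of_eq (Finset.card_fin m))

/-- Uncrossing: any multiset of nonempty sets can be transformed, preserving coverage and
not increasing the `g`-sum (for submodular `g`), into a cross-free multiset. -/
lemma uncross (g : Finset (Fin m) → ℝ)
    (hg : ∀ S T : Finset (Fin m), g (S ∪ T) + g (S ∩ T) ≤ g S + g T) :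
    ∀ (k : ℕ) (F : Multiset (Finset (Fin m))),
      ((F.map (fun S => m * m - S.card * S.card)).sum ≤ k) →
      (∀ S ∈ F, S.Nonempty) →
      ∃ F' : Multiset (Finset (Fin m)), CrossFree F' ∧ (∀ S ∈ F', S.Nonempty) ∧
        (∀ i, cov F' i = cov F i) ∧ (F'.map g).sum ≤ (F.map g).sum := by
  intro k
  induction k using Nat.strong_induction_on with
  | _ k IH =>
    intro F hpot hne
    by_cases hcf : CrossFree F
    · exact ⟨F, hcf, hne, fun _ => rfl, le_rfl⟩
    · rw [CrossFree] at hcf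
      push_neg at hcf
      obtain ⟨S, hS, T, hT, h1, h2, h3⟩ := hcf
      have hSneT : T ≠ S := fun h => h2 (h ▸ subset_rfl)
      have hT' : T ∈ F.erase S := (Multiset.mem_erase_of_ne hSneT).2 hT
      set rest := (F.erase S).erase T with hrest
      have hF : F = S ::ₘ T ::ₘ rest := by
        rw [hrest, Multiset.cons_erase hT', Multiset.cons_erase hS]
      set F₁ := (S ∪ T) ::ₘ (S ∩ T) ::ₘ rest with hF₁
      -- cardinal facts
      have hcard : (S ∪ T).card + (S ∩ T).card = S.card + T.card :=
        Finset.card_union_add_card_inter S T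
      have hSu : S ⊂ S ∪ T := by
        rw [Finset.ssubset_iff_of_subset Finset.subset_union_left]
        obtain ⟨x, hxT, hxS⟩ := Finset.not_subset.1 h3
        exact ⟨x, Finset.mem_union_right _ hxT, hxS⟩
      have hTu : T ⊂ S ∪ T := by
        rw [Finset.ssubset_iff_of_subset Finset.subset_union_right]
        obtain ⟨x, hxS, hxT⟩ := Finset.not_subset.1 h2
        exact ⟨x, Finset.mem_union_left _ hxS, hxT⟩
      have hSlt : S.card < (S ∪ T).card := Finset.card_lt_card hSu
      have hTlt : T.card < (S ∪ T).card := Finset.card_lt_card hTu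
      have key : S.card * S.card + T.card * T.card
          < (S ∪ T).card * (S ∪ T).card + (S ∩ T).card * (S ∩ T).card := by
        nlinarith [hcard, hSlt, hTlt]
      have hboundu : (S ∪ T).card * (S ∪ T).card ≤ m * m :=
        Nat.mul_le_mul (card_le_m _) (card_le_m _)
      have hboundv : (S ∩ T).card * (S ∩ T).card ≤ m * m :=
        Nat.mul_le_mul (card_le_m _) (card_le_m _)
      have hbounda : S.card * S.card ≤ m * m := Nat.mul_le_mul (card_le_m _) (card_le_m _)
      have hboundb : T.card * T.card ≤ m * m := Nat.mul_le_mul (card_le_m _) (card_le_m _)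
      -- potential strictly decreases
      have hpotlt : (F₁.map (fun S => m * m - S.card * S.card)).sum
          < (F.map (fun S => m * m - S.card * S.card)).sum := by
        rw [hF, hF₁]
        simp only [Multiset.map_cons, Multiset.sum_cons]
        generalize (Multiset.map (fun S => m * m - S.card * S.card) rest).sum = r
        generalize hu : (S ∪ T).card * (S ∪ T).card = uu at key hboundu
        generalize hv : (S ∩ T).card * (S ∩ T).card = vv at key hboundv
        generalize ha : S.card * S.card = aa at key hbounda
        generalize hb : T.card * T.card = bb at key hboundb
        generalize hm : m * m = mm at hboundu hboundv hbounda hboundb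
        omega
      have hne₁ : ∀ X ∈ F₁, X.Nonempty := by
        intro X hX
        rcases Multiset.mem_cons.1 hX with h | hX
        · exact h ▸ (hne S hS).inl
        rcases Multiset.mem_cons.1 hX with h | hX
        · exact h ▸ h1
        · exact hne X (Multiset.mem_of_mem_erase (Multiset.mem_of_mem_erase hX))
      have hk1 : (F₁.map (fun S => m * m - S.card * S.card)).sum < k :=
        lt_of_lt_of_le hpotlt hpot
      obtain ⟨F', hcf', hne', hcov', hsum'⟩ := IH _ hk1 F₁ le_rfl hne₁
      refine ⟨F', hcf', hne', ?_, ?_⟩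
      · intro i
        rw [hcov' i, hF]
        simp only [cov, hF₁, Multiset.countP_cons, Finset.mem_union, Finset.mem_inter]
        by_cases hiS : i ∈ S <;> by_cases hiT : i ∈ T <;> simp [hiS, hiT]
      · refine le_trans hsum' ?_
        rw [hF, hF₁]
        simp only [Multiset.map_cons, Multiset.sum_cons]
        have := hg S T
        linarith

/-- Splitting a cross-free multiset into a "top layer" partition and the rest. -/
lemma split : ∀ (n : ℕ) (F : Multiset (Finset (Fin m))), Multiset.card F ≤ n → CrossFree F →
    ∃ P Q : Multiset (Finset (Fin m)), F = P + Q ∧ ∀ i, cov P i = min (cov F i) 1 := by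
  intro n
  induction n with
  | zero =>
    intro F hc _
    have hF0 : F = 0 := by rw [← Multiset.card_eq_zero]; omega
    exact ⟨0, 0, by simp [hF0], by simp [hF0, cov]⟩
  | succ n IH =>
    intro F hc hcf
    by_cases hF0 : F = 0
    · exact ⟨0, 0, by simp [hF0], by simp [hF0, cov]⟩
    · obtain ⟨S, hSmem', hSmax'⟩ :=
        Finset.exists_max_image F.toFinset Finset.card (Multiset.toFinset_nonempty.2 hF0)
      have hS : S ∈ F := Multiset.mem_toFinset.1 hSmem'
      have hSmax : ∀ T ∈ F, T.card ≤ S.card := fun T hT =>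
        hSmax' T (Multiset.mem_toFinset.2 hT)
      set F' := F.erase S with hF'def
      have hF' : F = S ::ₘ F' := (Multiset.cons_erase hS).symm
      have hcard' : Multiset.card F' ≤ n := by
        have h1 : Multiset.card F' = Multiset.card F - 1 := by
          rw [hF'def, Multiset.card_erase_of_mem hS, Nat.pred_eq_sub_one]
        have hpos : Multiset.card F ≠ 0 := fun h => hF0 (Multiset.card_eq_zero.1 h)
        omega
      have hcf' : CrossFree F' := fun A hA B hB =>
        hcf A (Multiset.mem_of_mem_erase hA) B (Multiset.mem_of_mem_erase hB)
      obtain ⟨P₁, Q₁, hsplit₁, hcov₁⟩ := IH F' hcard' hcf'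
      have hdich : ∀ T ∈ F', T ⊆ S ∨ S ∩ T = ∅ := by
        intro T hT
        rcases hcf S hS T (Multiset.mem_of_mem_erase hT) with h | h | h
        · exact Or.inr h
        · have : S = T := Finset.eq_of_subset_of_card_le h
            (hSmax T (Multiset.mem_of_mem_erase hT))
          exact Or.inl (this ▸ subset_rfl)
        · exact Or.inl h
      set P₁s := P₁.filter (fun T => T ⊆ S) with hP₁s
      set P₁d := P₁.filter (fun T => ¬ T ⊆ S) with hP₁d
      have hfil : P₁s + P₁d = P₁ := Multiset.filter_add_not _ _
      have hmemP₁ : ∀ T ∈ P₁, T ∈ F' := fun T hT => by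
        rw [hsplit₁]; exact Multiset.mem_add.2 (Or.inl hT)
      refine ⟨S ::ₘ P₁d, Q₁ + P₁s, ?_, ?_⟩
      · rw [hF', hsplit₁, ← hfil, Multiset.cons_add]
        congr 1
        abel
      · intro i
        have e1 : cov F i = cov F' i + (if i ∈ S then 1 else 0) := by
          rw [hF']; simp [cov, Multiset.countP_cons]
        have e2 : cov (S ::ₘ P₁d) i = cov P₁d i + (if i ∈ S then 1 else 0) := by
          simp [cov, Multiset.countP_cons]
        have e3 : cov P₁ i = cov P₁s i + cov P₁d i := by
          rw [← hfil]; simp [cov, Multiset.countP_add]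
        have e4 := hcov₁ i
        by_cases hiS : i ∈ S
        · have hz : cov P₁d i = 0 := by
            refine Multiset.countP_eq_zero.2 (fun T hT => ?_)
            obtain ⟨hTP₁, hTnS⟩ := Multiset.mem_filter.1 hT
            rcases hdich T (hmemP₁ T hTP₁) with h | h
            · exact absurd h hTnS
            · intro hiT
              have : i ∈ S ∩ T := Finset.mem_inter.2 ⟨hiS, hiT⟩
              rw [h] at this
              simp at this
          rw [e2, e1, hz]
          simp [hiS]
        · have hz : cov P₁s i = 0 := by
            refine Multiset.countP_eq_zero.2 (fun T hT => ?_)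
            obtain ⟨hTP₁, hTs⟩ := Multiset.mem_filter.1 hT
            exact fun hiT => hiS (hTs hiT)
          rw [e2, e1]
          simp only [hiS, if_neg, if_false]
          omega

lemma cov_partition {P : Finset (Finset (Fin m))} {A : Finset (Fin m)}
    (hP : IsPartitionOf P A) (i : Fin m) :
    cov P.val i = if i ∈ A then 1 else 0 := by
  obtain ⟨hne, hdisj, hun⟩ := hP
  have hcards : cov P.val i = (P.filter (fun S => i ∈ S)).card := by
    rw [cov, Multiset.countP_eq_card_filter]
    rfl
  by_cases hiA : i ∈ A
  · obtain ⟨S₀, hS₀, hiS₀⟩ := Finset.mem_biUnion.1 (by rw [hun]; exact hiA)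
    have hone : P.filter (fun S => i ∈ S) = {S₀} := by
      rw [Finset.eq_singleton_iff_unique_mem]
      refine ⟨Finset.mem_filter.2 ⟨hS₀, hiS₀⟩, fun T hT => ?_⟩
      obtain ⟨hTP, hiT⟩ := Finset.mem_filter.1 hT
      by_contra hTne
      exact (Finset.disjoint_left.1 (hdisj T hTP S₀ hS₀ hTne)) hiT hiS₀
    rw [hcards, hone, if_pos hiA]
    simp
  · have hzero : P.filter (fun S => i ∈ S) = ∅ := by
      rw [Finset.filter_eq_empty_iff]
      intro S hSP hiS
      exact hiA (by rw [← hun]; exact Finset.mem_biUnion.2 ⟨S, hSP, hiS⟩)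
    rw [hcards, hzero, if_neg hiA]
    simp

lemma toPartition {G : Multiset (Finset (Fin m))} {W : Finset (Fin m)}
    (hne : ∀ S ∈ G, S.Nonempty)
    (hcov : ∀ i, cov G i = if i ∈ W then 1 else 0) :
    IsPartitionOf G.toFinset W ∧
      ∀ g : Finset (Fin m) → ℝ, ∑ S ∈ G.toFinset, g S = (G.map g).sum := by
  have hcov1 : ∀ i, cov G i ≤ 1 := by
    intro i; rw [hcov i]; split <;> omega
  have hnodup : G.Nodup := by
    rw [Multiset.nodup_iff_count_le_one]
    intro T
    by_cases hT : T ∈ G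
    · obtain ⟨i, hi⟩ := hne T hT
      have hle : Multiset.count T G ≤ cov G i := by
        rw [Multiset.count_eq_card_filter_eq, cov, Multiset.countP_eq_card_filter]
        exact Multiset.card_le_card
          (Multiset.monotone_filter_right _ (fun X hX => hX ▸ hi))
      exact hle.trans (hcov1 i)
    · simp [Multiset.count_eq_zero_of_notMem hT]
  refine ⟨⟨fun V hV => hne V (Multiset.mem_toFinset.1 hV), ?_, ?_⟩, ?_⟩
  · intro V hV W' hW' hVW
    rw [Finset.disjoint_left]
    intro i hiV hiW
    have h2 : 2 ≤ cov G i := by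
      have hsub : ({V, W'} : Finset (Finset (Fin m))) ⊆
          (Multiset.filter (fun S => i ∈ S) G).toFinset := by
        intro X hX
        rcases Finset.mem_insert.1 hX with h | h
        · exact Multiset.mem_toFinset.2
            (Multiset.mem_filter.2 ⟨Multiset.mem_toFinset.1 (h ▸ hV), h ▸ hiV⟩)
        · rw [Finset.mem_singleton] at h
          exact Multiset.mem_toFinset.2
            (Multiset.mem_filter.2 ⟨Multiset.mem_toFinset.1 (h ▸ hW'), h ▸ hiW⟩)
      calc 2 = ({V, W'} : Finset (Finset (Fin m))).card := (Finset.card_pair hVW).symm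
        _ ≤ (Multiset.filter (fun S => i ∈ S) G).toFinset.card := Finset.card_le_card hsub
        _ ≤ Multiset.card (Multiset.filter (fun S => i ∈ S) G) := Multiset.toFinset_card_le _
        _ = cov G i := (Multiset.countP_eq_card_filter _ _).symm
    have := hcov1 i
    omega
  · ext i
    rw [Finset.mem_biUnion]
    constructor
    · rintro ⟨V, hV, hiV⟩
      have hpos : 0 < cov G i :=
        Multiset.countP_pos.2 ⟨V, Multiset.mem_toFinset.1 hV, hiV⟩
      rw [hcov i] at hpos
      by_contra hiW
      rw [if_neg hiW] at hpos
      omega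
    · intro hiW
      have hpos : 0 < cov G i := by rw [hcov i, if_pos hiW]; omega
      obtain ⟨V, hVG, hiV⟩ := Multiset.countP_pos.1 hpos
      exact ⟨V, Multiset.mem_toFinset.2 hVG, hiV⟩
  · intro g
    show (G.toFinset.val.map g).sum = _
    rw [Multiset.toFinset_val, Multiset.dedup_eq_self.2 hnodup]

lemma phi_submodular (g : Finset (Fin m) → ℝ)
    (hg : ∀ S T : Finset (Fin m), g (S ∪ T) + g (S ∩ T) ≤ g S + g T)
    (A B : Finset (Fin m)) :
    phi g (A ∪ B) + phi g (A ∩ B) ≤ phi g A + phi g B := by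
  obtain ⟨PA, hPA, hPAeq⟩ := exists_phi g A
  obtain ⟨PB, hPB, hPBeq⟩ := exists_phi g B
  set F₀ : Multiset (Finset (Fin m)) := PA.val + PB.val with hF₀def
  have hneF₀ : ∀ S ∈ F₀, S.Nonempty := by
    intro S hS
    rcases Multiset.mem_add.1 hS with h | h
    · exact hPA.1 S (Finset.mem_def.2 h)
    · exact hPB.1 S (Finset.mem_def.2 h)
  have hcovF₀ : ∀ i, cov F₀ i =
      (if i ∈ A then 1 else 0) + (if i ∈ B then 1 else 0) := by
    intro i
    rw [hF₀def]
    show Multiset.countP _ (PA.val + PB.val) = _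
    rw [Multiset.countP_add]
    rw [show Multiset.countP (fun S => i ∈ S) PA.val = cov PA.val i from rfl,
      show Multiset.countP (fun S => i ∈ S) PB.val = cov PB.val i from rfl,
      cov_partition hPA i, cov_partition hPB i]
  obtain ⟨F', hcf', hne', hcov', hsum'⟩ :=
    uncross g hg ((F₀.map (fun S => m * m - S.card * S.card)).sum) F₀ le_rfl hneF₀
  obtain ⟨P, Q, hPQ, hcovP⟩ := split (Multiset.card F') F' le_rfl hcf'
  have hnePQ : ∀ S ∈ F', S.Nonempty := hne'
  have hcovP' : ∀ i, cov P i = if i ∈ A ∪ B then 1 else 0 := by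
    intro i
    rw [hcovP i, hcov' i, hcovF₀ i]
    by_cases hA : i ∈ A <;> by_cases hB : i ∈ B <;>
      simp [Finset.mem_union, hA, hB]
  have hcovQ' : ∀ i, cov Q i = if i ∈ A ∩ B then 1 else 0 := by
    intro i
    have hadd : cov F' i = cov P i + cov Q i := by
      rw [hPQ]; simp [cov, Multiset.countP_add]
    have h1 := hcov' i
    have h2 := hcovF₀ i
    have h3 := hcovP' i
    by_cases hA : i ∈ A <;> by_cases hB : i ∈ B <;>
      simp [Finset.mem_union, Finset.mem_inter, hA, hB] at h1 h2 h3 ⊢ <;>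
      omega
  have hneP : ∀ S ∈ P, S.Nonempty := fun S hS =>
    hnePQ S (by rw [hPQ]; exact Multiset.mem_add.2 (Or.inl hS))
  have hneQ : ∀ S ∈ Q, S.Nonempty := fun S hS =>
    hnePQ S (by rw [hPQ]; exact Multiset.mem_add.2 (Or.inr hS))
  obtain ⟨hPpart, hPsum⟩ := toPartition hneP hcovP'
  obtain ⟨hQpart, hQsum⟩ := toPartition hneQ hcovQ'
  have step1 : phi g (A ∪ B) + phi g (A ∩ B) ≤ (F'.map g).sum := by
    have e : (F'.map g).sum = (P.map g).sum + (Q.map g).sum := by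
      rw [hPQ, Multiset.map_add, Multiset.sum_add]
    rw [e, ← hPsum g, ← hQsum g]
    exact add_le_add (phi_le hPpart) (phi_le hQpart)
  have step2 : (F₀.map g).sum = phi g A + phi g B := by
    rw [hF₀def, Multiset.map_add, Multiset.sum_add, hPAeq, hPBeq]
    rfl
  linarith [step1, hsum', step2.symm.le]

/-- initial segments of `Fin m`. -/
def seg (n : ℕ) : Finset (Fin m) := Finset.univ.filter (fun j : Fin m => (j : ℕ) < n)

lemma seg_zero : (seg 0 : Finset (Fin m)) = ∅ := by
  simp [seg]

lemma seg_top : (seg m : Finset (Fin m)) = Finset.univ := by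
  simp only [seg, Finset.filter_eq_self]
  exact fun j _ => j.isLt

lemma greedy_le (g : Finset (Fin m) → ℝ)
    (hg : ∀ S T : Finset (Fin m), g (S ∪ T) + g (S ∩ T) ≤ g S + g T) :
    ∀ (n : ℕ) (T : Finset (Fin m)), T ⊆ seg n →
      ∑ i ∈ T, (phi g (seg ((i : ℕ) + 1)) - phi g (seg (i : ℕ))) ≤ phi g T := by
  intro n
  induction n with
  | zero =>
    intro T hT
    have : T = ∅ := Finset.subset_empty.1 (by rwa [← seg_zero])
    simp [this, phi_empty]
  | succ n IH =>
    intro T hT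
    by_cases hn : ∃ t ∈ T, (t : ℕ) = n
    · obtain ⟨t, htT, htn⟩ := hn
      have hT' : T.erase t ⊆ seg n := by
        intro j hj
        obtain ⟨hjt, hjT⟩ := Finset.mem_erase.1 hj
        have := hT hjT
        simp only [seg, Finset.mem_filter] at this ⊢
        refine ⟨Finset.mem_univ _, ?_⟩
        have hjn : (j : ℕ) ≠ n := fun h => hjt (Fin.ext (h.trans htn.symm))
        omega
      have hunion : T ∪ seg n = seg (n + 1) := by
        ext j
        simp only [Finset.mem_union, seg, Finset.mem_filter, Finset.mem_univ, true_and]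
        constructor
        · rintro (h | h)
          · have := hT h
            simp only [seg, Finset.mem_filter] at this
            omega
          · omega
        · intro h
          by_cases hj : (j : ℕ) < n
          · exact Or.inr hj
          · have : (j : ℕ) = n := by omega
            exact Or.inl (by rwa [show j = t from Fin.ext (this.trans htn.symm)])
      have hinter : T ∩ seg n = T.erase t := by
        ext j
        simp only [Finset.mem_inter, Finset.mem_erase, seg, Finset.mem_filter,
          Finset.mem_univ, true_and]
        constructor
        · rintro ⟨hjT, hjn⟩
          exact ⟨fun h => by omega, hjT⟩
        · rintro ⟨hjt, hjT⟩
          have hjn : (j : ℕ) ≠ n := fun h => hjt (Fin.ext (h.trans htn.symm))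
          have := hT hjT
          simp only [seg, Finset.mem_filter] at this
          refine ⟨hjT, by omega⟩
      have hsum : ∑ i ∈ T, (phi g (seg ((i : ℕ) + 1)) - phi g (seg (i : ℕ)))
          = ∑ i ∈ T.erase t, (phi g (seg ((i : ℕ) + 1)) - phi g (seg (i : ℕ)))
            + (phi g (seg (n + 1)) - phi g (seg n)) := by
        rw [← htn]
        exact (Finset.sum_erase_add T _ htT).symm
      have hIH := IH (T.erase t) hT'
      have hsub := phi_submodular g hg T (seg n)
      rw [hunion, hinter] at hsub
      rw [hsum]
      linarith
    · push_neg at hn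
      have hTn : T ⊆ seg n := by
        intro j hj
        have := hT hj
        simp only [seg, Finset.mem_filter, Finset.mem_univ, true_and] at this ⊢
        have := hn j hj
        omega
      exact IH T hTn

end RcoAux

open RcoAux in
/-- the minimum sum-rate for omniscience satisfies
`R_CO = H(X_M) − min_P ((∑_{S∈P} H(X_S) − H(X_M)) / (|P| − 1))`, the minimum being over
partitions `P` of `M` with `|P| ≥ 2`. -/
theorem rco_partition_formula {m : ℕ} (hm : 2 ≤ m)
    (H : Finset (Fin m) → ℝ) (hH0 : H ∅ = 0)
    (hHmono : ∀ S T : Finset (Fin m), S ⊆ T → H S ≤ H T)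
    (hHsub : ∀ S T : Finset (Fin m), H (S ∪ T) + H (S ∩ T) ≤ H S + H T)
    (Rco : ℝ)
    (hRco : IsLeast {x : ℝ | ∃ R : Fin m → ℝ,
        (∀ S : Finset (Fin m), S.Nonempty → S ≠ Finset.univ →
          H Finset.univ - H Sᶜ ≤ ∑ i ∈ S, R i) ∧
        x = ∑ i, R i} Rco)
    (μ : ℝ)
    (hμ : IsLeast {x : ℝ | ∃ P : Finset (Finset (Fin m)),
        IsPartitionOf P Finset.univ ∧ 2 ≤ P.card ∧
        x = ((∑ S ∈ P, H S) - H Finset.univ) / ((P.card : ℝ) - 1)} μ) :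
    Rco = H Finset.univ - μ := by
  have hm0 : 0 < m := by omega
  haveI : Nonempty (Fin m) := ⟨⟨0, hm0⟩⟩
  have huniv_ne : (Finset.univ : Finset (Fin m)).Nonempty := Finset.univ_nonempty
  set Hu := H Finset.univ with hHu
  set c := Hu - μ with hc
  set g : Finset (Fin m) → ℝ := fun S => H S - μ with hgdef
  have hg : ∀ S T : Finset (Fin m), g (S ∪ T) + g (S ∩ T) ≤ g S + g T := by
    intro S T
    simp only [hgdef]
    have := hHsub S T
    linarith
  -- phi g univ = c
  have hphi_univ : phi g Finset.univ = c := by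
    refine le_antisymm ?_ ?_
    · have := phi_le_single (g := g) huniv_ne
      simpa [hgdef] using this
    · refine le_phi (fun P hP => ?_)
      rcases Nat.lt_or_ge P.card 2 with hcard | hcard
      · interval_cases h : P.card
        · have hP0 : P = ∅ := Finset.card_eq_zero.1 h
          exfalso
          have := hP.2.2
          rw [hP0] at this
          simp at this
          exact Finset.nonempty_iff_ne_empty.1 huniv_ne this.symm
        · obtain ⟨S, hS⟩ := Finset.card_eq_one.1 h
          have hSuniv : S = Finset.univ := by
            have := hP.2.2
            rw [hS] at this
            simpa using this
          rw [hS, hSuniv]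
          simp [hgdef, hc, hHu]
      · have hmem : ((∑ S ∈ P, H S) - Hu) / ((P.card : ℝ) - 1) ∈
            {x : ℝ | ∃ P : Finset (Finset (Fin m)),
              IsPartitionOf P Finset.univ ∧ 2 ≤ P.card ∧
              x = ((∑ S ∈ P, H S) - H Finset.univ) / ((P.card : ℝ) - 1)} :=
          ⟨P, hP, hcard, rfl⟩
        have hle := hμ.2 hmem
        have hk1 : (0 : ℝ) < (P.card : ℝ) - 1 := by
          have : (2 : ℝ) ≤ (P.card : ℝ) := by exact_mod_cast hcard
          linarith
        have hμk : μ * ((P.card : ℝ) - 1) ≤ (∑ S ∈ P, H S) - Hu := by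
          rw [le_div_iff₀ hk1] at hle
          exact hle
        have hsumg : ∑ S ∈ P, g S = (∑ S ∈ P, H S) - (P.card : ℝ) * μ := by
          simp only [hgdef]
          rw [Finset.sum_sub_distrib]
          simp [mul_comm]
        rw [hsumg]
        have : (Hu - μ) ≤ (∑ S ∈ P, H S) - (P.card : ℝ) * μ := by nlinarith [hμk]
        linarith [this]
  -- upper bound : Rco ≤ c via the greedy vector
  have hupper : Rco ≤ c := by
    set R : Fin m → ℝ :=
      fun i => phi g (seg ((i : ℕ) + 1)) - phi g (seg (i : ℕ)) with hRdef
    have hsumR : ∑ i, R i = c := by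
      have : ∑ i : Fin m, R i =
          ∑ n ∈ Finset.range m, (phi g (seg (n + 1)) - phi g (seg n)) :=
        Fin.sum_univ_eq_sum_range (fun n => phi g (seg (n + 1)) - phi g (seg n)) m
      rw [this, Finset.sum_range_sub (fun n => phi g (seg n)) m]
      rw [seg_top, seg_zero, hphi_univ, phi_empty]
      ring
    have hfeas : ∀ S : Finset (Fin m), S.Nonempty → S ≠ Finset.univ →
        Hu - H Sᶜ ≤ ∑ i ∈ S, R i := by
      intro S hSne hSuniv
      have hScne : (Sᶜ : Finset (Fin m)).Nonempty := by
        rw [Finset.nonempty_iff_ne_empty]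
        intro h
        exact hSuniv ((Finset.compl_eq_empty_iff S).1 h)
      have h1 : ∑ i ∈ Sᶜ, R i ≤ phi g Sᶜ := by
        have := greedy_le g hg m Sᶜ (by rw [seg_top]; exact Finset.subset_univ _)
        exact this
      have h2 : phi g Sᶜ ≤ g Sᶜ := phi_le_single hScne
      have h3 : ∑ i ∈ S, R i + ∑ i ∈ Sᶜ, R i = ∑ i, R i :=
        Finset.sum_add_sum_compl S R
      rw [hsumR] at h3
      simp only [hgdef] at h2
      have : ∑ i ∈ S, R i = c - ∑ i ∈ Sᶜ, R i := by linarith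
      rw [this, hc]
      linarith
    exact hRco.2 ⟨R, hfeas, hsumR.symm⟩
  -- lower bound : c ≤ Rco
  have hlower : c ≤ Rco := by
    obtain ⟨R, hfeas, hsum⟩ := hRco.1
    obtain ⟨P₀, hP₀, hk, hμval⟩ := hμ.1
    set k := P₀.card with hkdef
    have hk1 : (0 : ℝ) < (k : ℝ) - 1 := by
      have : (2 : ℝ) ≤ (k : ℝ) := by exact_mod_cast hk
      linarith
    have hblock : ∀ S ∈ P₀, Hu - H S ≤ Rco - ∑ i ∈ S, R i := by
      intro S hS
      have hSne : S.Nonempty := hP₀.1 S hS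
      have hSuniv : S ≠ Finset.univ := by
        have hone : 1 < P₀.card := by omega
        obtain ⟨T, hT, hTS⟩ := Finset.exists_mem_ne hone S
        obtain ⟨t, ht⟩ := hP₀.1 T hT
        intro h
        have hdisj := hP₀.2.1 T hT S hS hTS
        exact (Finset.disjoint_left.1 hdisj) ht (by rw [h]; exact Finset.mem_univ t)
      have hScne : (Sᶜ : Finset (Fin m)).Nonempty := by
        rw [Finset.nonempty_iff_ne_empty]
        intro h
        exact hSuniv ((Finset.compl_eq_empty_iff S).1 h)
      have hScuniv : (Sᶜ : Finset (Fin m)) ≠ Finset.univ := by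
        intro h
        obtain ⟨s, hs⟩ := hSne
        have : s ∈ Sᶜ := by rw [h]; exact Finset.mem_univ s
        exact (Finset.mem_compl.1 this) hs
      have := hfeas Sᶜ hScne hScuniv
      rw [compl_compl] at this
      have h3 : ∑ i ∈ S, R i + ∑ i ∈ Sᶜ, R i = ∑ i, R i :=
        Finset.sum_add_sum_compl S R
      rw [← hsum] at h3
      linarith
    have hbiun : ∑ S ∈ P₀, ∑ i ∈ S, R i = ∑ i, R i := by
      have hpd : (↑P₀ : Set (Finset (Fin m))).PairwiseDisjoint id := by
        intro V hV W hW hVW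
        exact hP₀.2.1 V hV W hW hVW
      have hbi := Finset.sum_biUnion (f := R) (s := P₀) (t := id) hpd
      rw [hP₀.2.2] at hbi
      simpa using hbi.symm
    have hsumineq : (k : ℝ) * Hu - ∑ S ∈ P₀, H S ≤ (k : ℝ) * Rco - Rco := by
      have h1 := Finset.sum_le_sum hblock
      rw [Finset.sum_sub_distrib, Finset.sum_sub_distrib, hbiun, ← hsum,
        Finset.sum_const, Finset.sum_const] at h1
      simpa [hkdef, nsmul_eq_mul, mul_comm] using h1
    have hμeq : μ * ((k : ℝ) - 1) = (∑ S ∈ P₀, H S) - Hu := by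
      rw [hμval]
      field_simp
    have : ((k : ℝ) - 1) * c ≤ ((k : ℝ) - 1) * Rco := by
      rw [hc]
      nlinarith [hμeq, hsumineq]
    exact le_of_mul_le_mul_left (by linarith [this]) hk1
  rw [hc] at hupper hlower
  linarith
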